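/- Let g be C² on ℝ, bounded away from 0 on [0,1], with bounded second derivative, and let G(x) = ∫₀^x g. Then for u ∈ [α, 1−α] with α > 0 small, ∫_{u−α}^{u+α} 1/(G(x+α) − G(x−α)) dx = 1/g(u) + O(α²), i.e. there is a constant C (depending only on bounds on g, g', g'') such that |∫_{u−α}^{u+α} dx/(G(x+α)−G(x−α)) − 1/g(u)| ≤ Cα² for all sufficiently small α > 0. -/

import Mathlib

open Set intervalIntegral

lemma lip_of_deriv_bound {f : ℝ → ℝ} (hf : Differentiable ℝ f) {B : ℝ}
    (hB : ∀ t, |deriv f t| ≤ B) (a b : ℝ) : |f b - f a| ≤ B * |b - a| := by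
  have := convex_univ.norm_image_sub_le_of_norm_deriv_le (f := f)
    (fun x _ => hf x) (fun x _ => hB x) (mem_univ a) (mem_univ b)
  simpa [Real.norm_eq_abs] using this

lemma taylor_bound {g : ℝ → ℝ} (hg : ContDiff ℝ 2 g) {B : ℝ}
    (hB : ∀ t, |deriv (deriv g) t| ≤ B) (x y : ℝ) :
    |g y - g x - deriv g x * (y - x)| ≤ B * (y - x) ^ 2 := by
  have hd1 : Differentiable ℝ g := hg.differentiable two_ne_zero
  have hg1 : ContDiff ℝ 1 (deriv g) := by
    have : ContDiff ℝ (1 + 1) g := by norm_num [hg]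
    exact (contDiff_succ_iff_deriv.mp this).2.2
  have hd2 : Differentiable ℝ (deriv g) := hg1.differentiable one_ne_zero
  have hlip := lip_of_deriv_bound hd2 hB
  set s := uIcc x y with hs
  have hφ : ∀ t ∈ s, HasDerivWithinAt (fun v => g v - deriv g x * v)
      (deriv g t - deriv g x) s t := by
    intro t _
    have h1 : HasDerivAt (fun v => deriv g x * v) (deriv g x) t := by
      simpa using (hasDerivAt_id t).const_mul (deriv g x)
    exact ((hd1 t).hasDerivAt.sub h1).hasDerivWithinAt
  have hB0 : 0 ≤ B := le_trans (abs_nonneg _) (hB 0)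
  have bound : ∀ t ∈ s, ‖deriv g t - deriv g x‖ ≤ B * |y - x| := by
    intro t ht
    have h1 := hlip x t
    have h2 : |t - x| ≤ |y - x| := abs_sub_left_of_mem_uIcc ht
    calc ‖deriv g t - deriv g x‖ = |deriv g t - deriv g x| := rfl
      _ ≤ B * |t - x| := h1
      _ ≤ B * |y - x| := by nlinarith
  have key := (convex_uIcc x y).norm_image_sub_le_of_norm_hasDerivWithin_le
    hφ bound left_mem_uIcc right_mem_uIcc
  have : |(g y - deriv g x * y) - (g x - deriv g x * x)| ≤ B * |y - x| * |y - x| := by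
    simpa [Real.norm_eq_abs] using key
  calc |g y - g x - deriv g x * (y - x)|
      = |(g y - deriv g x * y) - (g x - deriv g x * x)| := by ring_nf
    _ ≤ B * |y - x| * |y - x| := this
    _ = B * (y - x) ^ 2 := by rw [mul_assoc, ← abs_mul, ← sq, abs_sq]

lemma one_div_sub_one_div' {a b : ℝ} (ha : a ≠ 0) (hb : b ≠ 0) :
    1 / a - 1 / b = (b - a) / (a * b) := by
  rw [div_sub_div _ _ ha hb, one_mul, mul_one]

set_option maxHeartbeats 1000000 in
/-- For `g` of class `C²`, bounded below by `l > 0` on a neighborhood of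
`[0,1]`, with `|g''| ≤ B`, and `G(x) = ∫₀^x g`, we have uniformly for `u ∈ [α, 1−α]`
`∫_{u−α}^{u+α} dx/(G(x+α)−G(x−α)) = 1/g(u) + O(α²)`. -/
theorem stmt_11 (g : ℝ → ℝ) (l B : ℝ) (hl : 0 < l)
    (hg : ContDiff ℝ 2 g)
    (hlow : ∀ t ∈ Icc (-1 : ℝ) 2, l ≤ g t)
    (hB : ∀ t, |deriv (deriv g) t| ≤ B) :
    ∃ C > 0, ∃ α₀ > 0, ∀ α : ℝ, 0 < α → α ≤ α₀ → ∀ u ∈ Icc α (1 - α),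
      |(∫ x in (u - α)..(u + α),
          1 / ((∫ v in (0:ℝ)..(x + α), g v) - ∫ v in (0:ℝ)..(x - α), g v)) - 1 / g u|
        ≤ C * α ^ 2 := by
  have hcg : Continuous g := hg.continuous
  have hgi : ∀ a b : ℝ, IntervalIntegrable g MeasureTheory.volume a b :=
    fun a b => hcg.intervalIntegrable a b
  have hd1 : Differentiable ℝ g := hg.differentiable two_ne_zero
  have hg1 : ContDiff ℝ 1 (deriv g) := by
    have : ContDiff ℝ (1 + 1) g := by norm_num [hg]
    exact (contDiff_succ_iff_deriv.mp this).2.2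
  have hcg' : Continuous (deriv g) := hg1.continuous
  obtain ⟨A, hA⟩ := (isCompact_Icc (a := (-1:ℝ)) (b := 2)).exists_bound_of_continuousOn
    hcg'.continuousOn
  have hA0 : 0 ≤ A := le_trans (norm_nonneg _) (hA 0 (by norm_num))
  have hB0 : 0 ≤ B := le_trans (abs_nonneg _) (hB 0)
  have htay := taylor_bound hg hB
  have hlipIcc : ∀ x ∈ Icc (-1:ℝ) 2, ∀ y ∈ Icc (-1:ℝ) 2, |g y - g x| ≤ A * |y - x| := by
    intro x hx y hy
    have := (convex_Icc (-1:ℝ) 2).norm_image_sub_le_of_norm_deriv_le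
      (fun t _ => (hd1 t)) (fun t ht => hA t ht) hx hy
    simpa [Real.norm_eq_abs] using this
  refine ⟨B / l ^ 2 + B / l ^ 2 + A ^ 2 / l ^ 3 + 1, by positivity, 1, one_pos, ?_⟩
  intro α hα hα1 u hu
  obtain ⟨hu1, hu2⟩ := hu
  have hαα : α ≤ 1 - α := le_trans hu1 hu2
  have h0u : (0:ℝ) ≤ u - α := by linarith
  have hu1' : u + α ≤ 1 := by linarith
  have hle : u - α ≤ u + α := by linarith
  -- the inner integral as an integral over [x-α, x+α]
  set D : ℝ → ℝ := fun x => ∫ v in (x - α)..(x + α), g v with hD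
  have hGD : ∀ x : ℝ, (∫ v in (0:ℝ)..(x + α), g v) - (∫ v in (0:ℝ)..(x - α), g v) = D x :=
    fun x => integral_interval_sub_left (hgi 0 (x + α)) (hgi 0 (x - α))
  have hGc : Continuous fun t => ∫ v in (0:ℝ)..t, g v :=
    intervalIntegral.continuous_primitive hgi 0
  have hDc : Continuous D := by
    have : D = fun x => (∫ v in (0:ℝ)..(x + α), g v) - (∫ v in (0:ℝ)..(x - α), g v) :=
      funext fun x => (hGD x).symm
    rw [this]
    exact (hGc.comp (continuous_id.add continuous_const)).sub
      (hGc.comp (continuous_id.sub continuous_const))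
  -- membership facts
  have hmem : ∀ x ∈ Icc (u - α) (u + α), x ∈ Icc (-1:ℝ) 2 := by
    intro x hx; constructor <;> [linarith [hx.1]; linarith [hx.2]]
  have hmemsub : ∀ x ∈ Icc (u - α) (u + α), ∀ v ∈ Icc (x - α) (x + α), v ∈ Icc (-1:ℝ) 2 := by
    intro x hx v hv
    constructor <;> [linarith [hx.1, hv.1]; linarith [hx.2, hv.2]]
  have humem : u ∈ Icc (-1:ℝ) 2 := by constructor <;> [linarith; linarith]
  -- lower bound on D
  have hDlow : ∀ x ∈ Icc (u - α) (u + α), 2 * α * l ≤ D x := by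
    intro x hx
    have hle2 : x - α ≤ x + α := by linarith
    have h1 : (∫ _ in (x - α)..(x + α), l) ≤ D x := by
      apply integral_mono_on hle2 (intervalIntegrable_const) (hgi _ _)
      intro v hv; exact hlow v (hmemsub x hx v hv)
    have h2 : (∫ _ in (x - α)..(x + α), l) = 2 * α * l := by
      rw [intervalIntegral.integral_const, smul_eq_mul]; ring
    linarith
  -- |D x - 2α g x| ≤ 2Bα³
  have hDB : ∀ x ∈ Icc (u - α) (u + α), |D x - 2 * α * g x| ≤ 2 * B * α ^ 3 := by
    intro x hx
    have hle2 : x - α ≤ x + α := by linarith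
    have hil : IntervalIntegrable (fun v => g x + deriv g x * (v - x))
        MeasureTheory.volume (x - α) (x + α) :=
      ((continuous_const.add (continuous_const.mul
        (continuous_id.sub continuous_const))).intervalIntegrable _ _)
    have hlin : (∫ v in (x - α)..(x + α), (v - x)) = 0 := by
      rw [integral_sub (intervalIntegrable_id) (intervalIntegrable_const)]
      simp [integral_id, intervalIntegral.integral_const]
      ring
    have hcm : (∫ v in (x - α)..(x + α), deriv g x * (v - x))
        = deriv g x * ∫ v in (x - α)..(x + α), (v - x) := integral_const_mul _ _
    have hil2 : IntervalIntegrable (fun v : ℝ => deriv g x * (v - x))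
        MeasureTheory.volume (x - α) (x + α) := by
      apply Continuous.intervalIntegrable; fun_prop
    have e2 : (∫ v in (x - α)..(x + α), (g x + deriv g x * (v - x))) = 2 * α * g x := by
      rw [integral_add (intervalIntegrable_const) hil2,
        hcm, hlin, mul_zero, add_zero, intervalIntegral.integral_const, smul_eq_mul]
      ring
    have e1 : D x - 2 * α * g x
        = ∫ v in (x - α)..(x + α), (g v - (g x + deriv g x * (v - x))) := by
      rw [integral_sub (hgi _ _) hil, e2]
    have hbd : ∀ v ∈ uIoc (x - α) (x + α),
        ‖g v - (g x + deriv g x * (v - x))‖ ≤ B * α ^ 2 := by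
      intro v hv
      rw [uIoc_of_le hle2] at hv
      have hvx : |v - x| ≤ α := by
        rw [abs_le]; constructor <;> [linarith [hv.1]; linarith [hv.2]]
      have h1 : |g v - g x - deriv g x * (v - x)| ≤ B * (v - x) ^ 2 := htay x v
      have h2 : (v - x) ^ 2 ≤ α ^ 2 := by nlinarith [abs_nonneg (v - x), sq_abs (v - x)]
      calc ‖g v - (g x + deriv g x * (v - x))‖
          = |g v - g x - deriv g x * (v - x)| := by rw [Real.norm_eq_abs]; ring_nf
        _ ≤ B * (v - x) ^ 2 := h1
        _ ≤ B * α ^ 2 := by nlinarith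
    have := intervalIntegral.norm_integral_le_of_norm_le_const hbd
    rw [← e1] at this
    have habs : |x + α - (x - α)| = 2 * α := by
      rw [abs_of_pos (by linarith)]; ring
    rw [Real.norm_eq_abs, habs] at this
    calc |D x - 2 * α * g x| ≤ B * α ^ 2 * (2 * α) := this
      _ = 2 * B * α ^ 3 := by ring
  -- g lower bound on interval
  have hglx : ∀ x ∈ Icc (u - α) (u + α), l ≤ g x := fun x hx => hlow x (hmem x hx)
  have hglu : l ≤ g u := hlow u humem
  have hgu0 : g u ≠ 0 := ne_of_gt (lt_of_lt_of_le hl hglu)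
  have hgx0 : ∀ x ∈ Icc (u - α) (u + α), g x ≠ 0 :=
    fun x hx => ne_of_gt (lt_of_lt_of_le hl (hglx x hx))
  set H : ℝ → ℝ := fun x => 1 / (2 * α) * (1 / g x) with hHdef
  -- continuity / integrability
  have hIccsub : uIcc (u - α) (u + α) = Icc (u - α) (u + α) := uIcc_of_le hle
  have hcontD : ContinuousOn (fun x => 1 / D x) (uIcc (u - α) (u + α)) := by
    rw [hIccsub]
    exact continuousOn_const.div hDc.continuousOn
      (fun x hx => ne_of_gt (lt_of_lt_of_le (by positivity) (hDlow x hx)))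
  have hintD : IntervalIntegrable (fun x => 1 / D x) MeasureTheory.volume (u - α) (u + α) :=
    hcontD.intervalIntegrable
  have hcont1g : ContinuousOn (fun x => 1 / g x) (uIcc (u - α) (u + α)) := by
    rw [hIccsub]
    exact continuousOn_const.div hcg.continuousOn (fun x hx => hgx0 x hx)
  have hint1g : IntervalIntegrable (fun x => 1 / g x) MeasureTheory.volume (u - α) (u + α) :=
    hcont1g.intervalIntegrable
  have hintH : IntervalIntegrable H MeasureTheory.volume (u - α) (u + α) := by
    have : ContinuousOn H (uIcc (u - α) (u + α)) := continuousOn_const.mul hcont1g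
    exact this.intervalIntegrable
  -- rewrite the target integral
  have hrw : (∫ x in (u - α)..(u + α),
      1 / ((∫ v in (0:ℝ)..(x + α), g v) - ∫ v in (0:ℝ)..(x - α), g v))
      = ∫ x in (u - α)..(u + α), 1 / D x := by
    apply intervalIntegral.integral_congr
    intro x _
    dsimp only
    rw [hGD x]
  rw [hrw]
  have h2αne : (2 * α : ℝ) ≠ 0 := by positivity
  -- first error: |∫ 1/D - ∫ H| ≤ (B/l^2) * α^2
  have herr1 : |(∫ x in (u - α)..(u + α), 1 / D x) - ∫ x in (u - α)..(u + α), H x|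
      ≤ B / l ^ 2 * α ^ 2 := by
    have hsub : (∫ x in (u - α)..(u + α), 1 / D x) - (∫ x in (u - α)..(u + α), H x)
        = ∫ x in (u - α)..(u + α), (1 / D x - H x) := (integral_sub hintD hintH).symm
    have hbd : ∀ x ∈ uIoc (u - α) (u + α), ‖1 / D x - H x‖ ≤ B * α / (2 * l ^ 2) := by
      intro x hxI
      rw [uIoc_of_le hle] at hxI
      have hx : x ∈ Icc (u - α) (u + α) := ⟨le_of_lt hxI.1, hxI.2⟩
      have hDx : 2 * α * l ≤ D x := hDlow x hx
      have hDxpos : 0 < D x := lt_of_lt_of_le (by positivity) hDx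
      have hEx : 2 * α * l ≤ 2 * α * g x := by nlinarith [hglx x hx]
      have hExpos : 0 < 2 * α * g x := lt_of_lt_of_le (by positivity) hEx
      have hnum : |2 * α * g x - D x| ≤ 2 * B * α ^ 3 := by
        have := hDB x hx
        rw [abs_sub_comm]; exact this
      have hHx : H x = 1 / (2 * α * g x) := by
        show 1 / (2 * α) * (1 / g x) = _
        rw [div_mul_div_comm, one_mul]
      have hid : 1 / D x - H x = (2 * α * g x - D x) / (D x * (2 * α * g x)) := by
        rw [hHx, one_div_sub_one_div' (ne_of_gt hDxpos) (ne_of_gt hExpos)]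
      rw [Real.norm_eq_abs, hid, abs_div, abs_of_pos (mul_pos hDxpos hExpos)]
      calc |2 * α * g x - D x| / (D x * (2 * α * g x))
          ≤ (2 * B * α ^ 3) / ((2 * α * l) * (2 * α * l)) :=
            div_le_div₀ (by positivity) hnum (by positivity)
              (mul_le_mul hDx hEx (by positivity) (le_of_lt hDxpos))
        _ = B * α / (2 * l ^ 2) := by
            field_simp
    have := intervalIntegral.norm_integral_le_of_norm_le_const hbd
    rw [← hsub] at this
    have habs : |u + α - (u - α)| = 2 * α := by rw [abs_of_pos (by linarith)]; ring
    rw [Real.norm_eq_abs, habs] at this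
    calc |(∫ x in (u - α)..(u + α), 1 / D x) - ∫ x in (u - α)..(u + α), H x|
        ≤ B * α / (2 * l ^ 2) * (2 * α) := this
      _ = B / l ^ 2 * α ^ 2 := by field_simp
  -- second error: |∫ H - 1/g u| ≤ (B/l^2 + A^2/l^3) * α^2
  set c : ℝ := deriv g u / (g u) ^ 2 with hc
  have hil3 : IntervalIntegrable (fun x : ℝ => c * (x - u))
      MeasureTheory.volume (u - α) (u + α) := by
    apply Continuous.intervalIntegrable; fun_prop
  have hil4 : IntervalIntegrable (fun x : ℝ => 1 / g x - 1 / g u)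
      MeasureTheory.volume (u - α) (u + α) :=
    (hcont1g.sub continuousOn_const).intervalIntegrable
  have hlinu : (∫ x in (u - α)..(u + α), (x - u)) = 0 := by
    rw [integral_sub (intervalIntegrable_id) (intervalIntegrable_const)]
    simp [integral_id, intervalIntegral.integral_const]
    ring
  have hcmu : (∫ x in (u - α)..(u + α), c * (x - u))
      = c * ∫ x in (u - α)..(u + α), (x - u) := integral_const_mul _ _
  have hintee : (∫ x in (u - α)..(u + α), (1 / g x - 1 / g u + c * (x - u)))
      = (∫ x in (u - α)..(u + α), 1 / g x) - 2 * α * (1 / g u) := by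
    rw [integral_add hil4 hil3, hcmu, hlinu, mul_zero, add_zero,
      integral_sub hint1g intervalIntegrable_const,
      intervalIntegral.integral_const, smul_eq_mul]
    ring
  have hebd : ∀ x ∈ uIoc (u - α) (u + α),
      ‖1 / g x - 1 / g u + c * (x - u)‖ ≤ (B / l ^ 2 + A ^ 2 / l ^ 3) * α ^ 2 := by
    intro x hxI
    rw [uIoc_of_le hle] at hxI
    have hx : x ∈ Icc (u - α) (u + α) := ⟨le_of_lt hxI.1, hxI.2⟩
    have hla : l ≤ g x := hglx x hx
    have hlb : l ≤ g u := hglu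
    have htayl : |g x - g u - deriv g u * (x - u)| ≤ B * (x - u) ^ 2 := htay u x
    have hlp : |g x - g u| ≤ A * |x - u| := hlipIcc u humem x (hmem x hx)
    have hdu : |deriv g u| ≤ A := hA u humem
    have ht : |x - u| ≤ α := by
      rw [abs_le]; constructor <;> [linarith [hx.1]; linarith [hx.2]]
    have ht2 : (x - u) ^ 2 ≤ α ^ 2 := by nlinarith [abs_nonneg (x - u), sq_abs (x - u)]
    have hax : (0:ℝ) < g x := lt_of_lt_of_le hl hla
    have hbu : (0:ℝ) < g u := lt_of_lt_of_le hl hlb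
    have hid : 1 / g x - 1 / g u + c * (x - u)
        = -((g x - g u - deriv g u * (x - u)) / (g x * g u))
        + deriv g u * (x - u) * (g x - g u) / (g x * g u ^ 2) := by
      rw [hc]
      field_simp
      ring
    rw [Real.norm_eq_abs, hid]
    have h1 : |-((g x - g u - deriv g u * (x - u)) / (g x * g u))|
        ≤ B * α ^ 2 / l ^ 2 := by
      rw [abs_neg, abs_div, abs_of_pos (mul_pos hax hbu)]
      calc |g x - g u - deriv g u * (x - u)| / (g x * g u)
          ≤ (B * α ^ 2) / (l * l) :=
            div_le_div₀ (by positivity) (by nlinarith) (by positivity)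
              (mul_le_mul hla hlb (le_of_lt hl) (le_of_lt hax))
        _ = B * α ^ 2 / l ^ 2 := by ring_nf
    have h2 : |deriv g u * (x - u) * (g x - g u) / (g x * g u ^ 2)|
        ≤ A ^ 2 * α ^ 2 / l ^ 3 := by
      rw [abs_div, abs_of_pos (mul_pos hax (pow_pos hbu 2))]
      have hnum2 : |deriv g u * (x - u) * (g x - g u)| ≤ A ^ 2 * α ^ 2 := by
        calc |deriv g u * (x - u) * (g x - g u)|
            = |deriv g u| * |x - u| * |g x - g u| := by rw [abs_mul, abs_mul]
          _ ≤ A * α * (A * α) := by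
              apply mul_le_mul _ _ (abs_nonneg _) (by positivity)
              · exact mul_le_mul hdu ht (abs_nonneg _) hA0
              · calc |g x - g u| ≤ A * |x - u| := hlp
                  _ ≤ A * α := by nlinarith
          _ = A ^ 2 * α ^ 2 := by ring
      have hsq : l ^ 2 ≤ g u ^ 2 := by nlinarith
      have hden2 : l * l ^ 2 ≤ g x * g u ^ 2 :=
        mul_le_mul hla hsq (by positivity) (le_of_lt hax)
      calc |deriv g u * (x - u) * (g x - g u)| / (g x * g u ^ 2)
          ≤ (A ^ 2 * α ^ 2) / (l * l ^ 2) :=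
            div_le_div₀ (by positivity) hnum2 (by positivity) hden2
        _ = A ^ 2 * α ^ 2 / l ^ 3 := by ring_nf
    calc |-((g x - g u - deriv g u * (x - u)) / (g x * g u))
          + deriv g u * (x - u) * (g x - g u) / (g x * g u ^ 2)|
        ≤ |-((g x - g u - deriv g u * (x - u)) / (g x * g u))|
          + |deriv g u * (x - u) * (g x - g u) / (g x * g u ^ 2)| := abs_add_le _ _
      _ ≤ B * α ^ 2 / l ^ 2 + A ^ 2 * α ^ 2 / l ^ 3 := add_le_add h1 h2
      _ = (B / l ^ 2 + A ^ 2 / l ^ 3) * α ^ 2 := by ring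
  have herr2 : |(∫ x in (u - α)..(u + α), H x) - 1 / g u|
      ≤ (B / l ^ 2 + A ^ 2 / l ^ 3) * α ^ 2 := by
    have hJ : (∫ x in (u - α)..(u + α), H x)
        = 1 / (2 * α) * ∫ x in (u - α)..(u + α), (1 / g x) := integral_const_mul _ _
    have hsplit : (∫ x in (u - α)..(u + α), H x) - 1 / g u
        = 1 / (2 * α) * ∫ x in (u - α)..(u + α), (1 / g x - 1 / g u + c * (x - u)) := by
      rw [hJ, hintee]
      field_simp
    have habs2 := intervalIntegral.norm_integral_le_of_norm_le_const hebd
    have habs : |u + α - (u - α)| = 2 * α := by rw [abs_of_pos (by linarith)]; ring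
    rw [Real.norm_eq_abs, habs] at habs2
    rw [hsplit, abs_mul, abs_of_pos (by positivity : (0:ℝ) < 1 / (2 * α))]
    calc 1 / (2 * α) * |∫ x in (u - α)..(u + α), (1 / g x - 1 / g u + c * (x - u))|
        ≤ 1 / (2 * α) * ((B / l ^ 2 + A ^ 2 / l ^ 3) * α ^ 2 * (2 * α)) := by
          apply mul_le_mul_of_nonneg_left habs2 (by positivity)
      _ = (B / l ^ 2 + A ^ 2 / l ^ 3) * α ^ 2 := by
          field_simp
  -- combine
  have htri : |(∫ x in (u - α)..(u + α), 1 / D x) - 1 / g u|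
      ≤ B / l ^ 2 * α ^ 2 + (B / l ^ 2 + A ^ 2 / l ^ 3) * α ^ 2 := by
    calc |(∫ x in (u - α)..(u + α), 1 / D x) - 1 / g u|
        = |((∫ x in (u - α)..(u + α), 1 / D x) - ∫ x in (u - α)..(u + α), H x)
          + ((∫ x in (u - α)..(u + α), H x) - 1 / g u)| := by rw [sub_add_sub_cancel]
      _ ≤ |(∫ x in (u - α)..(u + α), 1 / D x) - ∫ x in (u - α)..(u + α), H x|
          + |(∫ x in (u - α)..(u + α), H x) - 1 / g u| := abs_add_le _ _
      _ ≤ B / l ^ 2 * α ^ 2 + (B / l ^ 2 + A ^ 2 / l ^ 3) * α ^ 2 := add_le_add herr1 herr2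
  nlinarith [sq_nonneg α, htri]
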